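/- arXiv:2511.23266 — 8 statements merged into one kernel-verified Lean document; each statement's English description precedes it below -/
import Mathlib

section
/- Let d ≥ 1, s ≥ 1 and a < b be real numbers. Let I be a quadrature functional. Let H : ℝ^d → ℝ be continuously differentiable with gradient ∇H, and let B : ℝ^d → ℝ^{d×d} be such that B(z) is skew-symmetric for every z. Suppose x : ℝ → ℝ^d is a polynomial map of degree ≤ s and g : ℝ → ℝ^d is a polynomial map of degree ≤ s−1 such that: (i) for every polynomial map y : ℝ → ℝ^d of degree ≤ s−1, I(t ↦ y(t)ᵀ x′(t)) = I(t ↦ y(t)ᵀ B(x(t)) g(t)); and (ii) for every polynomial map y₀ : ℝ → ℝ^d of degree ≤ s−1, I(t ↦ g(t)ᵀ y₀(t)) = ∫_a^b ∇H(x(t))ᵀ y₀(t) dt. Then H(x(b)) = H(x(a)). -/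
open Matrix

/-- The continuous linear functional `w ↦ g ⬝ᵥ w` on `Fin d → ℝ`,
representing the gradient vector `g` as a (Fréchet) derivative. -/
noncomputable def dotCLM {d : ℕ} (g : Fin d → ℝ) : (Fin d → ℝ) →L[ℝ] ℝ :=
  LinearMap.toContinuousLinearMap
  { toFun := fun w => g ⬝ᵥ w
    map_add' := by
      intro a b
      simp [dotProduct, mul_add, Finset.sum_add_distrib]
    map_smul' := by
      intro c a
      simp [dotProduct, Finset.mul_sum, mul_left_comm] }

/-- `y : ℝ → Fin d → ℝ` is a polynomial map of degree at most `k`: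
each component is a real polynomial function of degree at most `k`. -/
def IsPolyMap {d : ℕ} (k : ℕ) (y : ℝ → Fin d → ℝ) : Prop :=
  ∀ i : Fin d, ∃ q : Polynomial ℝ, q.natDegree ≤ k ∧ ∀ t : ℝ, y t i = q.eval t

/-- Proposition 2.1: the auxiliary-variable discretisation of the
Poisson system `ẋ = B(x) ∇H(x)` conserves the Hamiltonian `H` over the timestep `[a, b]`. -/
theorem poisson_scheme_conserves_H
    (d s : ℕ) (hd : 1 ≤ d) (hs : 1 ≤ s) (a b : ℝ) (hab : a < b)
    (I : (ℝ → ℝ) →ₗ[ℝ] ℝ)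
    (H : (Fin d → ℝ) → ℝ) (gH : (Fin d → ℝ) → (Fin d → ℝ))
    (hH : ∀ z, HasFDerivAt H (dotCLM (gH z)) z)
    (hgH : Continuous gH)
    (B : (Fin d → ℝ) → Matrix (Fin d) (Fin d) ℝ)
    (hB : ∀ z, (B z)ᵀ = -(B z))
    (x : ℝ → Fin d → ℝ) (hx : IsPolyMap s x)
    (g : ℝ → Fin d → ℝ) (hg : IsPolyMap (s - 1) g)
    (h1 : ∀ y : ℝ → Fin d → ℝ, IsPolyMap (s - 1) y →
      I (fun t => y t ⬝ᵥ deriv x t) = I (fun t => y t ⬝ᵥ (B (x t)).mulVec (g t)))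
    (h2 : ∀ y₀ : ℝ → Fin d → ℝ, IsPolyMap (s - 1) y₀ →
      I (fun t => g t ⬝ᵥ y₀ t) = ∫ t in a..b, gH (x t) ⬝ᵥ y₀ t) :
    H (x b) = H (x a) := by
  classical
  choose q hq1 hq2 using hx
  -- the derivative map
  set x' : ℝ → Fin d → ℝ := fun t i => ((q i).derivative).eval t with hx'def
  have hxd : ∀ t, HasDerivAt x (x' t) t := by
    intro t
    rw [hasDerivAt_pi]
    intro i
    have h := (q i).hasDerivAt t
    exact h.congr_of_eventuallyEq (Filter.Eventually.of_forall fun u => hq2 i u)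
  have hderiv : deriv x = x' := funext fun t => (hxd t).deriv
  have hx'poly : IsPolyMap (s - 1) x' := by
    intro i
    exact ⟨(q i).derivative, le_trans (Polynomial.natDegree_derivative_le _)
      (Nat.sub_le_sub_right (hq1 i) 1), fun t => rfl⟩
  -- skew-symmetry kills the quadratic form
  have hskew : ∀ t, g t ⬝ᵥ (B (x t)).mulVec (g t) = 0 := by
    intro t
    set A := B (x t)
    set v := g t
    have h : v ⬝ᵥ A.mulVec v = -(v ⬝ᵥ A.mulVec v) := by
      calc v ⬝ᵥ A.mulVec v = A.vecMul v ⬝ᵥ v := by rw [Matrix.dotProduct_mulVec]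
        _ = (Aᵀ).mulVec v ⬝ᵥ v := by rw [Matrix.mulVec_transpose]
        _ = ((-A).mulVec v) ⬝ᵥ v := by rw [hB]
        _ = -(A.mulVec v ⬝ᵥ v) := by rw [Matrix.neg_mulVec, neg_dotProduct]
        _ = -(v ⬝ᵥ A.mulVec v) := by rw [dotProduct_comm]
    linarith
  have hA : I (fun t => g t ⬝ᵥ deriv x t) = 0 := by
    rw [h1 g hg]
    have : (fun t => g t ⬝ᵥ (B (x t)).mulVec (g t)) = (0 : ℝ → ℝ) := by
      funext t; exact hskew t
    rw [this, map_zero]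
  -- continuity facts
  have hxc : Continuous x :=
    continuous_pi fun i => by
      have : (fun t => x t i) = fun t => (q i).eval t := funext fun t => hq2 i t
      rw [this]; exact (q i).continuous
  have hx'c : Continuous x' :=
    continuous_pi fun i => ((q i).derivative).continuous
  have hintc : Continuous fun t => gH (x t) ⬝ᵥ x' t := by
    have : (fun t => gH (x t) ⬝ᵥ x' t) = fun t => ∑ i, gH (x t) i * x' t i := rfl
    rw [this]
    exact continuous_finset_sum _ fun i _ =>
      (((continuous_apply i).comp (hgH.comp hxc))).mul ((continuous_apply i).comp hx'c)
  -- chain rule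
  have hchain : ∀ t, HasDerivAt (fun u => H (x u)) (gH (x t) ⬝ᵥ x' t) t := by
    intro t
    have h := (hH (x t)).comp_hasDerivAt t (hxd t)
    exact h
  -- FTC
  have hftc : ∫ t in a..b, gH (x t) ⬝ᵥ x' t = H (x b) - H (x a) :=
    intervalIntegral.integral_eq_sub_of_hasDerivAt (fun t _ => hchain t)
      (hintc.intervalIntegrable a b)
  have hB2 := h2 x' hx'poly
  rw [hderiv] at hA
  rw [hA] at hB2
  have : H (x b) - H (x a) = 0 := by rw [← hftc, ← hB2]
  linarith
end

section
/- Let d ≥ 1 and 1 ≤ P < d. Let v₁, …, v_P ∈ ℝ^d be linearly independent and let f ∈ ℝ^d satisfy v_pᵀ f = 0 for each p = 1, …, P. Then there exists an alternating (P+1)-multilinear form F : (ℝ^d)^{P+1} → ℝ such that F(v₁, …, v_P, y) = yᵀ f for every y ∈ ℝ^d. -/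
open Matrix

/-- pointwise content of Theorem 2.2: if `v₁, …, v_P ∈ ℝ^d` are linearly
independent and `f ∈ ℝ^d` is orthogonal to each `v_p`, then there is an alternating
`(P+1)`-multilinear form `F` on `ℝ^d` with `F(v₁, …, v_P, y) = yᵀ f` for all `y`. -/
theorem exists_alternating_form_representation
    (d P : ℕ) (hP : 1 ≤ P) (hPd : P < d)
    (v : Fin P → (Fin d → ℝ)) (hv : LinearIndependent ℝ v)
    (f : Fin d → ℝ) (hf : ∀ p : Fin P, v p ⬝ᵥ f = 0) :
    ∃ F : AlternatingMap ℝ (Fin d → ℝ) ℝ (Fin (P + 1)),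
      ∀ y : Fin d → ℝ, F (Fin.snoc v y) = y ⬝ᵥ f := by
  classical
  -- the linear map `c ↦ ∑ i, c i • v i`
  set T : (Fin P → ℝ) →ₗ[ℝ] (Fin d → ℝ) :=
    LinearMap.lsum ℝ (fun _ => ℝ) ℕ fun i => LinearMap.id.smulRight (v i) with hT
  have hker : LinearMap.ker T = ⊥ := Fintype.linearIndependent_iff'.1 hv
  obtain ⟨g, hg⟩ := T.exists_leftInverse_of_injective hker
  -- dual functionals
  set φ : Fin P → ((Fin d → ℝ) →ₗ[ℝ] ℝ) := fun p => (LinearMap.proj p).comp g with hφ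
  have hTsingle : ∀ p : Fin P, T (Pi.single p 1) = v p := by
    intro p
    simp only [hT, LinearMap.lsum_apply, LinearMap.coe_sum, LinearMap.coe_comp,
      Function.comp_apply, LinearMap.proj_apply, LinearMap.smulRight_apply, LinearMap.id_apply,
      Finset.sum_apply, Pi.single_apply, ite_smul, zero_smul]
    simp
  have hφv : ∀ p q : Fin P, φ p (v q) = if q = p then 1 else 0 := by
    intro p q
    have : g (v q) = Pi.single q 1 := by
      rw [← hTsingle q, ← LinearMap.comp_apply, hg, LinearMap.id_apply]
    simp [hφ, this, Pi.single_apply, eq_comm]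
  -- functional `x ↦ x ⬝ᵥ f`
  set ψ : (Fin d → ℝ) →ₗ[ℝ] ℝ := ∑ j, f j • LinearMap.proj j with hψ
  have hψapp : ∀ x : Fin d → ℝ, ψ x = x ⬝ᵥ f := by
    intro x
    simp [hψ, LinearMap.sum_apply, dotProduct, mul_comm]
  -- assemble the linear map into `ℝ^{P+1}`
  set L : (Fin d → ℝ) →ₗ[ℝ] (Fin (P + 1) → ℝ) :=
    LinearMap.pi (Fin.snoc φ ψ) with hL
  refine ⟨((Pi.basisFun ℝ (Fin (P + 1))).det).compLinearMap L, fun y => ?_⟩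
  rw [AlternatingMap.compLinearMap_apply, Module.Basis.det_apply]
  have hrepr : ((Pi.basisFun ℝ (Fin (P + 1))).toMatrix fun i => L ((Fin.snoc v y : Fin (P+1) → Fin d → ℝ) i)) =
      Matrix.of fun i j => ((Fin.snoc φ ψ : Fin (P+1) → ((Fin d → ℝ) →ₗ[ℝ] ℝ)) i) ((Fin.snoc v y : Fin (P+1) → Fin d → ℝ) j) := by
    ext i j
    rw [Module.Basis.toMatrix_apply, Pi.basisFun_repr]
    simp [hL, LinearMap.pi_apply]
  rw [hrepr]
  set M : Matrix (Fin (P + 1)) (Fin (P + 1)) ℝ :=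
    Matrix.of fun i j => ((Fin.snoc φ ψ : Fin (P+1) → ((Fin d → ℝ) →ₗ[ℝ] ℝ)) i) ((Fin.snoc v y : Fin (P+1) → Fin d → ℝ) j) with hM
  -- compute the determinant: expand along the last row of the transpose
  rw [Matrix.det_succ_row _ (Fin.last P)]
  have hMlast : ∀ j : Fin (P + 1), M (Fin.last P) j =
      if j = Fin.last P then y ⬝ᵥ f else 0 := by
    intro j
    refine Fin.lastCases ?_ (fun q => ?_) j
    · simp [hM, Fin.snoc_last, hψapp]
    · simp [hM, Fin.snoc_last, Fin.snoc_castSucc, hψapp, hf,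
        (Fin.castSucc_lt_last q).ne]
  rw [Finset.sum_eq_single (Fin.last P)]
  · rw [hMlast]
    have hsub : (M.submatrix (Fin.last P).succAbove (Fin.last P).succAbove) = 1 := by
      ext i j
      simp only [Matrix.submatrix_apply, Fin.succAbove_last, hM,
        Matrix.of_apply, Fin.snoc_castSucc]
      rw [hφv]
      simp [Matrix.one_apply, eq_comm]
    rw [hsub]
    simp
  · intro j _ hj
    rw [hMlast, if_neg hj]
    ring
  · intro h
    exact absurd (Finset.mem_univ _) h
end

section
/- Let d ≥ 1, 1 ≤ P < d, s ≥ 1 and a < b be real numbers. Let I be a quadrature functional. Let N₁, …, N_P : ℝ^d → ℝ be continuously differentiable with gradients ∇N_p, and let F̃ : ℝ^d → Alt^{P+1}(ℝ^d) assign to each z ∈ ℝ^d an alternating (P+1)-multilinear form F̃(z) on ℝ^d. Suppose x : ℝ → ℝ^d is a polynomial map of degree ≤ s and g₁, …, g_P : ℝ → ℝ^d are polynomial maps of degree ≤ s−1 such that: (i) for every polynomial map y : ℝ → ℝ^d of degree ≤ s−1, I(t ↦ y(t)ᵀ x′(t)) = I(t ↦ F̃(x(t))(g₁(t), …, g_P(t),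 y(t))); and (ii) for each p and every polynomial map y_p : ℝ → ℝ^d of degree ≤ s−1, I(t ↦ g_p(t)ᵀ y_p(t)) = ∫_a^b ∇N_p(x(t))ᵀ y_p(t) dt. Then N_p(x(b)) = N_p(x(a)) for every p = 1, …, P. -/
open Matrix

/-- Theorem 2.3: the auxiliary-variable discretisation of a multiply
conservative ODE, written via an alternating-form right-hand side `F̃`, conserves all
`P` invariants `N₁, …, N_P` over the timestep `[a, b]`. -/
theorem multi_conservative_scheme_conserves_all
    (d P s : ℕ) (hd : 1 ≤ d) (hP : 1 ≤ P) (hPd : P < d) (hs : 1 ≤ s)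
    (a b : ℝ) (hab : a < b)
    (I : (ℝ → ℝ) →ₗ[ℝ] ℝ)
    (N : Fin P → (Fin d → ℝ) → ℝ) (gN : Fin P → (Fin d → ℝ) → (Fin d → ℝ))
    (hN : ∀ p z, HasFDerivAt (N p) (dotCLM (gN p z)) z)
    (hgN : ∀ p, Continuous (gN p))
    (F : (Fin d → ℝ) → AlternatingMap ℝ (Fin d → ℝ) ℝ (Fin (P + 1)))
    (x : ℝ → Fin d → ℝ) (hx : IsPolyMap s x)
    (g : Fin P → ℝ → Fin d → ℝ) (hg : ∀ p, IsPolyMap (s - 1) (g p))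
    (h1 : ∀ y : ℝ → Fin d → ℝ, IsPolyMap (s - 1) y →
      I (fun t => y t ⬝ᵥ deriv x t) =
        I (fun t => F (x t) (Fin.snoc (fun p => g p t) (y t))))
    (h2 : ∀ p : Fin P, ∀ yp : ℝ → Fin d → ℝ, IsPolyMap (s - 1) yp →
      I (fun t => g p t ⬝ᵥ yp t) = ∫ t in a..b, gN p (x t) ⬝ᵥ yp t) :
    ∀ p : Fin P, N p (x b) = N p (x a) := by

  intro p
  -- choose polynomials for x
  choose q hqdeg hqeval using hx
  have hxderiv : ∀ t : ℝ, HasDerivAt x (fun i => (q i).derivative.eval t) t := by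
    intro t
    rw [hasDerivAt_pi]
    intro i
    have hxeq : (fun u => x u i) = fun u => (q i).eval u := funext (hqeval i)
    rw [hxeq]
    exact (q i).hasDerivAt t
  have hderiv_eq : ∀ t : ℝ, deriv x t = fun i => (q i).derivative.eval t :=
    fun t => (hxderiv t).deriv
  -- deriv x is a poly map of degree ≤ s - 1
  have hdx : IsPolyMap (s - 1) (deriv x) := by
    intro i
    refine ⟨(q i).derivative, ?_, fun t => by rw [hderiv_eq t]⟩
    exact le_trans (Polynomial.natDegree_derivative_le _) (Nat.sub_le_sub_right (hqdeg i) 1)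
  -- continuity
  have hxc : Continuous x := by
    have : x = fun t i => (q i).eval t := by
      funext t i; exact hqeval i t
    rw [this]
    exact continuous_pi fun i => (q i).continuous_aeval
  have hdxc : Continuous (deriv x) := by
    have : deriv x = fun t i => (q i).derivative.eval t := funext hderiv_eq
    rw [this]
    exact continuous_pi fun i => ((q i).derivative).continuous_aeval
  have hintc : Continuous (fun t => gN p (x t) ⬝ᵥ deriv x t) := by
    simp only [dotProduct]
    exact continuous_finset_sum _ fun i _ =>
      ((continuous_apply i).comp ((hgN p).comp hxc)).mul ((continuous_apply i).comp hdxc)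
  -- FTC
  have hFTC : ∫ t in a..b, gN p (x t) ⬝ᵥ deriv x t = N p (x b) - N p (x a) := by
    apply intervalIntegral.integral_eq_sub_of_hasDerivAt
    · intro t ht
      have := (hN p (x t)).comp_hasDerivAt t (hxderiv t)
      rw [hderiv_eq t]; exact this
    · exact hintc.intervalIntegrable a b
  -- the integral vanishes
  have hzero : (fun t : ℝ => F (x t) (Fin.snoc (fun p' => g p' t) (g p t))) = 0 := by
    funext t
    exact (F (x t)).map_eq_zero_of_eq _ (i := Fin.castSucc p) (j := Fin.last P)
      (by simp) (Fin.ne_of_lt (Fin.castSucc_lt_last p))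
  have hI0 : I (fun t => g p t ⬝ᵥ deriv x t) = 0 := by
    rw [h1 (g p) (hg p), hzero, map_zero]
  have := h2 p (deriv x) hdx
  rw [hI0] at this
  have : N p (x b) - N p (x a) = 0 := by rw [← hFTC, ← this]
  linarith
end

section
/- Let x, v : ℝ → ℝ³ be differentiable on an interval [a, b] with x(t) ≠ 0 for all t ∈ [a, b], satisfying the Kepler problem ẋ = v, v̇ = −x/‖x‖³ on [a, b]. Then the Runge–Lenz vector A(x(t), v(t)) = v(t) × (x(t) × v(t)) − x(t)/‖x(t)‖ is constant on [a, b]. -/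
open Matrix

/-- The Euclidean norm on `Fin n → ℝ`. -/
noncomputable def eucNorm {n : ℕ} (x : Fin n → ℝ) : ℝ := Real.sqrt (∑ i, x i ^ 2)

/-- along solutions of the Kepler problem `ẋ = v`, `v̇ = -x/‖x‖³` on `[a, b]`
(with `x(t) ≠ 0`), the Runge–Lenz vector `A = v × (x × v) − x/‖x‖` is constant. -/
theorem kepler_runge_lenz_conserved
    (a b : ℝ) (hab : a ≤ b) (x v : ℝ → Fin 3 → ℝ)
    (hx0 : ∀ t ∈ Set.Icc a b, x t ≠ 0)
    (hx : ∀ t ∈ Set.Icc a b, HasDerivAt x (v t) t)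
    (hv : ∀ t ∈ Set.Icc a b, HasDerivAt v (-(eucNorm (x t) ^ 3)⁻¹ • x t) t) :
    ∀ t ∈ Set.Icc a b,
      crossProduct (v t) (crossProduct (x t) (v t)) - (eucNorm (x t))⁻¹ • x t
        = crossProduct (v a) (crossProduct (x a) (v a)) - (eucNorm (x a))⁻¹ • x a := by
  set A : ℝ → Fin 3 → ℝ :=
    fun t => crossProduct (v t) (crossProduct (x t) (v t)) - (eucNorm (x t))⁻¹ • x t with hA
  have key : ∀ t ∈ Set.Icc a b, HasDerivAt A 0 t := by
    intro t ht
    have hxi : ∀ i, HasDerivAt (fun s => x s i) (v t i) t := fun i => hasDerivAt_pi.mp (hx t ht) i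
    have hvi : ∀ i, HasDerivAt (fun s => v s i) (-(eucNorm (x t) ^ 3)⁻¹ * x t i) t := by
      intro i
      simpa using hasDerivAt_pi.mp (hv t ht) i
    have hspos : 0 < ∑ i, x t i ^ 2 := by
      have h := hx0 t ht
      have hex : ∃ i, x t i ≠ 0 := by
        by_contra hc; push_neg at hc; exact h (funext hc)
      obtain ⟨i, hi⟩ := hex
      exact Finset.sum_pos' (fun j _ => sq_nonneg _) ⟨i, Finset.mem_univ i, by positivity⟩
    have hsd : HasDerivAt (fun s => ∑ i, x s i ^ 2) (∑ i, 2 * x t i * v t i) t := by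
      refine HasDerivAt.fun_sum fun i _ => ?_
      simpa [pow_one] using (hxi i).fun_pow 2
    have hRpos : 0 < eucNorm (x t) := Real.sqrt_pos.mpr hspos
    have hRd : HasDerivAt (fun s => eucNorm (x s))
        ((∑ i, 2 * x t i * v t i) / (2 * eucNorm (x t))) t := by
      unfold eucNorm
      exact hsd.sqrt hspos.ne'
    have hgd : HasDerivAt (fun s => (eucNorm (x s))⁻¹)
        (-((∑ i, 2 * x t i * v t i) / (2 * eucNorm (x t))) / (eucNorm (x t)) ^ 2) t :=
      hRd.inv hRpos.ne'
    have hR2 : eucNorm (x t) ^ 2 = x t 0 ^ 2 + x t 1 ^ 2 + x t 2 ^ 2 := by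
      unfold eucNorm
      rw [Real.sq_sqrt hspos.le, Fin.sum_univ_three]
    have hRne := hRpos.ne'
    rw [hasDerivAt_pi]
    intro i
    fin_cases i
    · have hfun : (fun s => A s 0) = fun s =>
          v s 1 * (x s 0 * v s 1 - x s 1 * v s 0) - v s 2 * (x s 2 * v s 0 - x s 0 * v s 2)
            - (eucNorm (x s))⁻¹ * x s 0 := by
        funext s; simp [hA, cross_apply, Pi.sub_apply, Pi.smul_apply, smul_eq_mul, Matrix.vecHead, Matrix.vecTail]
      have h := (((hvi 1).fun_mul (((hxi 0).fun_mul (hvi 1)).fun_sub ((hxi 1).fun_mul (hvi 0)))).fun_sub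
          ((hvi 2).fun_mul (((hxi 2).fun_mul (hvi 0)).fun_sub ((hxi 0).fun_mul (hvi 2))))).fun_sub
          (hgd.fun_mul (hxi 0))
      show HasDerivAt (fun s => A s 0) _ t
      rw [hfun]
      refine h.congr_deriv ?_
      symm
      simp only [Pi.zero_apply]
      rw [Fin.sum_univ_three]
      field_simp
      linear_combination (v t 0) * hR2
    · have hfun : (fun s => A s 1) = fun s =>
          v s 2 * (x s 1 * v s 2 - x s 2 * v s 1)
            - v s 0 * (x s 0 * v s 1 - x s 1 * v s 0)
            - (eucNorm (x s))⁻¹ * x s 1 := by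
        funext s; simp [hA, cross_apply, Pi.sub_apply, Pi.smul_apply, smul_eq_mul, Matrix.vecHead, Matrix.vecTail]
      have h := (((hvi 2).fun_mul (((hxi 1).fun_mul (hvi 2)).fun_sub ((hxi 2).fun_mul (hvi 1)))).fun_sub
          ((hvi 0).fun_mul (((hxi 0).fun_mul (hvi 1)).fun_sub ((hxi 1).fun_mul (hvi 0))))).fun_sub
          (hgd.fun_mul (hxi 1))
      show HasDerivAt (fun s => A s 1) _ t
      rw [hfun]
      refine h.congr_deriv ?_
      symm
      simp only [Pi.zero_apply]
      rw [Fin.sum_univ_three]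
      field_simp
      linear_combination (v t 1) * hR2
    · have hfun : (fun s => A s 2) = fun s =>
          v s 0 * (x s 2 * v s 0 - x s 0 * v s 2)
            - v s 1 * (x s 1 * v s 2 - x s 2 * v s 1)
            - (eucNorm (x s))⁻¹ * x s 2 := by
        funext s; simp [hA, cross_apply, Pi.sub_apply, Pi.smul_apply, smul_eq_mul, Matrix.vecHead, Matrix.vecTail]
      have h := (((hvi 0).fun_mul (((hxi 2).fun_mul (hvi 0)).fun_sub ((hxi 0).fun_mul (hvi 2)))).fun_sub
          ((hvi 1).fun_mul (((hxi 1).fun_mul (hvi 2)).fun_sub ((hxi 2).fun_mul (hvi 1))))).fun_sub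
          (hgd.fun_mul (hxi 2))
      show HasDerivAt (fun s => A s 2) _ t
      rw [hfun]
      refine h.congr_deriv ?_
      symm
      simp only [Pi.zero_apply]
      rw [Fin.sum_univ_three]
      field_simp
      linear_combination (v t 2) * hR2
  have hcont : ContinuousOn A (Set.Icc a b) :=
    fun s hs => (key s hs).continuousAt.continuousWithinAt
  exact constant_of_has_deriv_right_zero hcont
    (fun s hs => (key s ⟨hs.1, hs.2.le⟩).hasDerivWithinAt)
end

section
/- Let J be the 3×3 diagonal matrix with diagonal (1, 1, 2), and let e₁ = (1, 0, 0) ∈ ℝ³. Let n, l : ℝ → ℝ³ be differentiable on an interval [a, b] satisfying the Kovalevskaya top equations ṅ = n × (J l), l̇ = n × e₁ + l × (J l) on [a, b], where × denotes the cross product. Then the Kovalevskaya invariant K = (l₁² − l₂² − 2n₁)² + (2 l₁ l₂ − 2 n₂)², where l = (l₁, l₂, l₃) and n = (n₁, n₂, n₃), is constant on [a, b]. -/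
open Matrix

/-- along solutions of the Kovalevskaya top
`ṅ = n × (J l)`, `l̇ = n × e₁ + l × (J l)` with `J = diag(1,1,2)`, the Kovalevskaya
invariant `K = (l₁² − l₂² − 2n₁)² + (2 l₁ l₂ − 2 n₂)²` is constant on `[a, b]`. -/
theorem kovalevskaya_invariant_conserved
    (a b : ℝ) (hab : a ≤ b) (n l : ℝ → Fin 3 → ℝ)
    (hn : ∀ t ∈ Set.Icc a b,
      HasDerivAt n (crossProduct (n t) ((Matrix.diagonal ![1, 1, 2]).mulVec (l t))) t)
    (hl : ∀ t ∈ Set.Icc a b,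
      HasDerivAt l (crossProduct (n t) ![1, 0, 0]
        + crossProduct (l t) ((Matrix.diagonal ![1, 1, 2]).mulVec (l t))) t) :
    ∀ t ∈ Set.Icc a b,
      (l t 0 ^ 2 - l t 1 ^ 2 - 2 * n t 0) ^ 2 + (2 * l t 0 * l t 1 - 2 * n t 1) ^ 2
        = (l a 0 ^ 2 - l a 1 ^ 2 - 2 * n a 0) ^ 2 + (2 * l a 0 * l a 1 - 2 * n a 1) ^ 2 := by
  set K : ℝ → ℝ := fun t =>
    (l t 0 ^ 2 - l t 1 ^ 2 - 2 * n t 0) ^ 2 + (2 * l t 0 * l t 1 - 2 * n t 1) ^ 2 with hK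
  have key : ∀ t ∈ Set.Icc a b, HasDerivAt K 0 t := by
    intro t ht
    have hn0 := hasDerivAt_pi.mp (hn t ht) 0
    have hn1 := hasDerivAt_pi.mp (hn t ht) 1
    have hl0 := hasDerivAt_pi.mp (hl t ht) 0
    have hl1 := hasDerivAt_pi.mp (hl t ht) 1
    simp [cross_apply, Matrix.mulVec, Matrix.diagonal, dotProduct,
      Fin.sum_univ_three] at hn0 hn1 hl0 hl1
    have : HasDerivAt K
        (2 * (l t 0 ^ 2 - l t 1 ^ 2 - 2 * n t 0) *
            (2 * l t 0 * (l t 1 * l t 2) - 2 * l t 1 * (n t 2 - l t 0 * l t 2)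
              - 2 * (n t 1 * (2 * l t 2) - n t 2 * l t 1))
          + 2 * (2 * l t 0 * l t 1 - 2 * n t 1) *
            (2 * (l t 1 * l t 2) * l t 1 + 2 * l t 0 * (n t 2 - l t 0 * l t 2)
              - 2 * (n t 2 * l t 0 - n t 0 * (2 * l t 2)))) t := by
      have h1 : HasDerivAt (fun t => l t 0) (l t 1 * l t 2) t := by exact hl0.congr_deriv (by ring)
      have h2 : HasDerivAt (fun t => l t 1) (n t 2 - l t 0 * l t 2) t := by
        exact hl1.congr_deriv (by ring)
      have h3 : HasDerivAt (fun t => n t 0) (n t 1 * (2 * l t 2) - n t 2 * l t 1) t := by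
        exact hn0.congr_deriv (by ring)
      have h4 : HasDerivAt (fun t => n t 1) (n t 2 * l t 0 - n t 0 * (2 * l t 2)) t := by
        exact hn1.congr_deriv (by ring)
      have := (((h1.pow 2).sub (h2.pow 2)).sub (h3.const_mul 2)).pow 2 |>.add
        ((((h1.const_mul 2).mul h2).sub (h4.const_mul 2)).pow 2)
      exact this.congr_deriv (by simp only [Pi.pow_apply, Pi.sub_apply, Pi.mul_apply]; push_cast; ring)
    convert this using 1
    ring
  intro t ht
  have := constant_of_has_deriv_right_zero (f := K) (a := a) (b := b)
    (fun x hx => (key x hx).continuousAt.continuousWithinAt)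
    (fun x hx => ((key x (Set.mem_Icc_of_Ico hx)).hasDerivWithinAt))
  exact this t ht
end

section
/- Let d ≥ 1, s ≥ 1 and a < b be real numbers. Let I be a quadrature functional that is sign-preserving. Let E, S : ℝ^d → ℝ be continuously differentiable with gradients ∇E, ∇S, and let B̃, D̃ : ℝ^d × ℝ^d → ℝ^{d×d} satisfy, for all z, w ∈ ℝ^d: B̃(z, w) is skew-symmetric, D̃(z, w) is positive semidefinite, wᵀ B̃(z, w) = 0, and wᵀ D̃(z, w) = 0. Suppose x : ℝ → ℝ^d is a polynomial map of degree ≤ s and g_E, g_S : ℝ → ℝ^d are polynomial maps of degree ≤ s−1 such that for every polynomial map y : ℝ → ℝ^d of degree ≤ s−1: (i) I(t ↦ y(t)ᵀ x′(t)) = I(t ↦ y(t)ᵀ B̃(x(t), g_S(t)) g_E(t) + y(t)ᵀ D̃(x(t), g_E(t)) g_S(t)); (ii) I(t ↦ g_E(t)ᵀ y(t)) = ∫_a^b ∇E(x(t))ᵀ y(t) dt; and (iii) I(t ↦ g_S(t)ᵀ y(t)) = ∫_a^b ∇S(x(t))ᵀ y(t) dt. Then E(x(b)) = E(x(a)) and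 S(x(b)) ≥ S(x(a)). -/
open Matrix

/-- Theorem 3.2: the auxiliary-variable discretisation of the GENERIC ODE
`ẋ = B(x)∇E(x) + D(x)∇S(x)` with a sign-preserving quadrature functional conserves the
energy `E` and does not decrease the entropy `S` over the timestep `[a, b]`. -/
theorem generic_ode_scheme_energy_entropy
    (d s : ℕ) (hd : 1 ≤ d) (hs : 1 ≤ s) (a b : ℝ) (hab : a < b)
    (I : (ℝ → ℝ) →ₗ[ℝ] ℝ)
    (hIpos : ∀ φ : ℝ → ℝ, (∀ t, 0 ≤ φ t) → 0 ≤ I φ)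
    (E S : (Fin d → ℝ) → ℝ) (gE gS : (Fin d → ℝ) → (Fin d → ℝ))
    (hE : ∀ z, HasFDerivAt E (dotCLM (gE z)) z) (hgE : Continuous gE)
    (hS : ∀ z, HasFDerivAt S (dotCLM (gS z)) z) (hgS : Continuous gS)
    (Bt Dt : (Fin d → ℝ) → (Fin d → ℝ) → Matrix (Fin d) (Fin d) ℝ)
    (hBskew : ∀ z w, (Bt z w)ᵀ = -(Bt z w))
    (hDpos : ∀ z w (v : Fin d → ℝ), 0 ≤ v ⬝ᵥ (Dt z w).mulVec v)
    (hBdeg : ∀ z w, Matrix.vecMul w (Bt z w) = 0)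
    (hDdeg : ∀ z w, Matrix.vecMul w (Dt z w) = 0)
    (x : ℝ → Fin d → ℝ) (hx : IsPolyMap s x)
    (gEd gSd : ℝ → Fin d → ℝ)
    (hgEd : IsPolyMap (s - 1) gEd) (hgSd : IsPolyMap (s - 1) gSd)
    (h1 : ∀ y : ℝ → Fin d → ℝ, IsPolyMap (s - 1) y →
      I (fun t => y t ⬝ᵥ deriv x t) =
        I (fun t => y t ⬝ᵥ (Bt (x t) (gSd t)).mulVec (gEd t)
              + y t ⬝ᵥ (Dt (x t) (gEd t)).mulVec (gSd t)))
    (h2 : ∀ y : ℝ → Fin d → ℝ, IsPolyMap (s - 1) y →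
      I (fun t => gEd t ⬝ᵥ y t) = ∫ t in a..b, gE (x t) ⬝ᵥ y t)
    (h3 : ∀ y : ℝ → Fin d → ℝ, IsPolyMap (s - 1) y →
      I (fun t => gSd t ⬝ᵥ y t) = ∫ t in a..b, gS (x t) ⬝ᵥ y t) :
    E (x b) = E (x a) ∧ S (x a) ≤ S (x b) := by
  classical
  choose q hqdeg hqeval using hx
  -- derivative of x
  have hxd : ∀ t, HasDerivAt x (fun i => ((q i).derivative).eval t) t := by
    intro t
    rw [hasDerivAt_pi]
    intro i
    simp only [hqeval]
    exact (q i).hasDerivAt t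
  have hderiv : ∀ t, deriv x t = fun i => ((q i).derivative).eval t :=
    fun t => (hxd t).deriv
  have hdx : IsPolyMap (s - 1) (deriv x) := by
    intro i
    refine ⟨(q i).derivative, ?_, ?_⟩
    · exact le_trans (Polynomial.natDegree_derivative_le _)
        (Nat.sub_le_sub_right (hqdeg i) 1)
    · intro t; rw [hderiv t]
  have hcx : Continuous x := by
    apply continuous_pi
    intro i
    exact (Polynomial.continuous (q i)).congr fun t => (hqeval i t).symm
  have hcdx : Continuous (deriv x) := by
    apply continuous_pi
    intro i
    exact (Polynomial.continuous ((q i).derivative)).congr fun t => by rw [hderiv t]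
  have hdotCont : ∀ (g : (Fin d → ℝ) → (Fin d → ℝ)), Continuous g →
      Continuous (fun t => g (x t) ⬝ᵥ deriv x t) := by
    intro g hg
    have : Continuous (fun t => ∑ i, g (x t) i * deriv x t i) := by
      apply continuous_finset_sum
      intro i _
      exact ((continuous_apply i).comp (hg.comp hcx)).mul
        ((continuous_apply i).comp hcdx)
    exact this
  have hEchain : ∀ t, HasDerivAt (fun t => E (x t)) (gE (x t) ⬝ᵥ deriv x t) t := by
    intro t
    have h := (hE (x t)).comp_hasDerivAt t (hxd t)
    rw [hderiv t]
    exact h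
  have hSchain : ∀ t, HasDerivAt (fun t => S (x t)) (gS (x t) ⬝ᵥ deriv x t) t := by
    intro t
    have h := (hS (x t)).comp_hasDerivAt t (hxd t)
    rw [hderiv t]
    exact h
  have hEint : ∫ t in a..b, gE (x t) ⬝ᵥ deriv x t = E (x b) - E (x a) :=
    intervalIntegral.integral_eq_sub_of_hasDerivAt (fun t _ => hEchain t)
      ((hdotCont gE hgE).intervalIntegrable a b)
  have hSint : ∫ t in a..b, gS (x t) ⬝ᵥ deriv x t = S (x b) - S (x a) :=
    intervalIntegral.integral_eq_sub_of_hasDerivAt (fun t _ => hSchain t)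
      ((hdotCont gS hgS).intervalIntegrable a b)
  have e1 : I (fun t => gEd t ⬝ᵥ deriv x t) = E (x b) - E (x a) := by
    rw [h2 (deriv x) hdx, hEint]
  have s1 : I (fun t => gSd t ⬝ᵥ deriv x t) = S (x b) - S (x a) := by
    rw [h3 (deriv x) hdx, hSint]
  have e2 : I (fun t => gEd t ⬝ᵥ deriv x t) = 0 := by
    rw [h1 gEd hgEd]
    have hzero : (fun t => gEd t ⬝ᵥ (Bt (x t) (gSd t)).mulVec (gEd t)
        + gEd t ⬝ᵥ (Dt (x t) (gEd t)).mulVec (gSd t)) = (fun _ => (0 : ℝ)) := by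
      funext t
      have hB : gEd t ⬝ᵥ (Bt (x t) (gSd t)).mulVec (gEd t) = 0 := by
        have h1' : gEd t ⬝ᵥ (Bt (x t) (gSd t)).mulVec (gEd t)
            = Matrix.vecMul (gEd t) (Bt (x t) (gSd t)) ⬝ᵥ gEd t :=
          Matrix.dotProduct_mulVec _ _ _
        have h2' : Matrix.vecMul (gEd t) (Bt (x t) (gSd t))
            = (Bt (x t) (gSd t))ᵀ.mulVec (gEd t) :=
          (Matrix.mulVec_transpose _ _).symm
        rw [h2', hBskew, Matrix.neg_mulVec, neg_dotProduct,
          dotProduct_comm] at h1'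
        have h3' : gEd t ⬝ᵥ (Bt (x t) (gSd t)).mulVec (gEd t)
            = (Bt (x t) (gSd t)).mulVec (gEd t) ⬝ᵥ gEd t :=
          dotProduct_comm _ _
        linarith
      have hD : gEd t ⬝ᵥ (Dt (x t) (gEd t)).mulVec (gSd t) = 0 := by
        rw [Matrix.dotProduct_mulVec, hDdeg, zero_dotProduct]
      rw [hB, hD, add_zero]
    rw [hzero]
    have : (fun _ : ℝ => (0 : ℝ)) = (0 : ℝ → ℝ) := rfl
    rw [this, map_zero]
  have s2 : 0 ≤ I (fun t => gSd t ⬝ᵥ deriv x t) := by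
    rw [h1 gSd hgSd]
    apply hIpos
    intro t
    have hB : gSd t ⬝ᵥ (Bt (x t) (gSd t)).mulVec (gEd t) = 0 := by
      rw [Matrix.dotProduct_mulVec, hBdeg, zero_dotProduct]
    rw [hB, zero_add]
    exact hDpos _ _ _
  constructor
  · linarith [e1.symm.trans e2]
  · linarith [s1.symm.trans (le_antisymm (le_refl _) (le_refl _)).symm, s1, s2]
end

section
/- Let C ≥ 1, let T₀ > 0, and let T₁, …, T_C > 0. Define the (C+3)×(C+3) real matrix D by: the first two rows and first two columns are zero; for c = 1, …, C, the diagonal entry in position (c+2, c+2) is T₀/T_c; the entries in position (c+2, C+3) and (C+3, c+2) are −1 for each c = 1, …, C; the entry in position (C+3, C+3) is Σ_{c=1}^C T_c/T₀; and all other entries are zero. Then: (i) D is positive semidefinite, i.e. vᵀ D v ≥ 0 for every v ∈ ℝ^{C+3}; and (ii) for any a, b ∈ ℝ, the vector g = (a, b, T₁, …, T_C, T₀)ᵀ satisfies gᵀ D = 0. -/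
open Matrix

private lemma sum_decomp3 {C : ℕ} (f : Fin (C+3) → ℝ) :
    ∑ i, f i = f ⟨0, by omega⟩ + f ⟨1, by omega⟩
      + (∑ c : Fin C, f ((c.addNat 2).castLE (Nat.le_add_right (C+2) 1))) + f (Fin.last (C+2)) := by
  rw [Fin.sum_univ_castSucc, Fin.sum_univ_succ, Fin.sum_univ_succ]
  have h0 : ((0 : Fin (C+2)).castSucc : Fin (C+3)) = ⟨0, by omega⟩ := by ext; simp
  have h1 : (((0 : Fin (C+1)).succ).castSucc : Fin (C+3)) = ⟨1, by omega⟩ := by ext; simp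
  have h2 : ∀ c : Fin C, f ((c.succ.succ).castSucc) = f ((c.addNat 2).castLE (Nat.le_add_right (C+2) 1)) := by
    intro c; rfl
  rw [h0, h1]
  simp_rw [h2]
  ring


/-- the friction matrix `D` of the `C`-cylinder combustion engine model
(first two rows/columns zero; diagonal thermal block `T₀/T_c`; coupling `−1` between each
cylinder and the environment; corner entry `Σ_c T_c/T₀`) is positive semidefinite, and the
energy-gradient vector `g = (a, b, T₁, …, T_C, T₀)ᵀ` satisfies `gᵀ D = 0`. -/
theorem engine_friction_matrix_psd_and_degenerate
    (C : ℕ) (hC : 1 ≤ C) (T₀ : ℝ) (hT₀ : 0 < T₀) (T : Fin C → ℝ) (hT : ∀ c, 0 < T c)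
    (D : Matrix (Fin (C + 3)) (Fin (C + 3)) ℝ)
    (hzero : ∀ i j : Fin (C + 3), i.val < 2 ∨ j.val < 2 → D i j = 0)
    (hdiag : ∀ c : Fin C,
      D ((c.addNat 2).castLE (by omega)) ((c.addNat 2).castLE (by omega)) = T₀ / T c)
    (hoffdiag : ∀ c c' : Fin C, c ≠ c' →
      D ((c.addNat 2).castLE (by omega)) ((c'.addNat 2).castLE (by omega)) = 0)
    (hlastcol : ∀ c : Fin C,
      D ((c.addNat 2).castLE (by omega)) (Fin.last (C + 2)) = -1)
    (hlastrow : ∀ c : Fin C,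
      D (Fin.last (C + 2)) ((c.addNat 2).castLE (by omega)) = -1)
    (hcorner : D (Fin.last (C + 2)) (Fin.last (C + 2)) = ∑ c, T c / T₀) :
    (∀ v : Fin (C + 3) → ℝ, 0 ≤ v ⬝ᵥ D.mulVec v) ∧
    (∀ p q : ℝ,
      Matrix.vecMul
        (fun i : Fin (C + 3) =>
          if i.val = 0 then p
          else if i.val = 1 then q
          else if h : i.val < C + 2 then T ⟨i.val - 2, by omega⟩
          else T₀) D = 0) := by
  constructor
  · intro v
    -- row sums
    have h0sum : (∑ j, D ⟨0, by omega⟩ j * v j) = 0 :=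
      Finset.sum_eq_zero fun j _ => by
        rw [hzero ⟨0, by omega⟩ j (Or.inl (by norm_num))]; ring
    have h1sum : (∑ j, D ⟨1, by omega⟩ j * v j) = 0 :=
      Finset.sum_eq_zero fun j _ => by
        rw [hzero ⟨1, by omega⟩ j (Or.inl (by norm_num))]; ring
    have hrowM : ∀ c : Fin C,
        (∑ j, D ((c.addNat 2).castLE (by omega)) j * v j)
          = (T₀ / T c) * v ((c.addNat 2).castLE (by omega)) - v (Fin.last (C+2)) := by
      intro c
      rw [sum_decomp3 (fun j => D ((c.addNat 2).castLE (by omega)) j * v j)]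
      rw [hzero _ ⟨0, by omega⟩ (Or.inr (by norm_num)),
          hzero _ ⟨1, by omega⟩ (Or.inr (by norm_num)), hlastcol c]
      rw [Finset.sum_eq_single_of_mem c (Finset.mem_univ c)
        (fun b _ hb => by rw [hoffdiag c b (Ne.symm hb)]; ring)]
      rw [hdiag c]
      ring
    have hrowlast :
        (∑ j, D (Fin.last (C+2)) j * v j)
          = ∑ c, (-(v ((c.addNat 2).castLE (by omega)))
              + (T c / T₀) * v (Fin.last (C+2))) := by
      rw [sum_decomp3 (fun j => D (Fin.last (C+2)) j * v j)]
      rw [hzero _ ⟨0, by omega⟩ (Or.inr (by norm_num)),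
          hzero _ ⟨1, by omega⟩ (Or.inr (by norm_num)), hcorner]
      simp_rw [hlastrow]
      rw [Finset.sum_add_distrib, Finset.sum_mul]
      ring_nf
      exact congrArg _ (Finset.sum_congr rfl fun c _ => by ring)
    have e1 : v ⬝ᵥ D.mulVec v = ∑ i, v i * ∑ j, D i j * v j := rfl
    have key : v ⬝ᵥ D.mulVec v
        = ∑ c, (T₀ / T c) * (v ((c.addNat 2).castLE (by omega))
            - (T c / T₀) * v (Fin.last (C+2)))^2 := by
      rw [e1, sum_decomp3 (fun i => v i * ∑ j, D i j * v j)]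
      rw [h0sum, h1sum, hrowlast]
      simp_rw [hrowM]
      rw [mul_zero, mul_zero, zero_add, zero_add, Finset.mul_sum,
        ← Finset.sum_add_distrib]
      refine Finset.sum_congr rfl fun c _ => ?_
      have h1 := (hT c).ne'
      have h2 := hT₀.ne'
      field_simp
      ring
    rw [key]
    exact Finset.sum_nonneg fun c _ =>
      mul_nonneg (div_nonneg hT₀.le (hT c).le) (sq_nonneg _)
  · intro p q
    funext j
    set g : Fin (C+3) → ℝ := fun i =>
      if i.val = 0 then p else if i.val = 1 then q
      else if h : i.val < C + 2 then T ⟨i.val - 2, by omega⟩ else T₀ with hgdef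
    have hg0 : g ⟨0, by omega⟩ = p := rfl
    have hg1 : g ⟨1, by omega⟩ = q := rfl
    have hgM : ∀ c : Fin C, g ((c.addNat 2).castLE (by omega)) = T c := by
      intro c
      have h1 : (((c.addNat 2).castLE (by omega : C + 2 ≤ C + 3)) : Fin (C+3)).val
          = c.val + 2 := rfl
      simp only [hgdef, h1]
      rw [if_neg (by omega), if_neg (by omega), dif_pos (by omega)]
      exact congrArg T (Fin.ext (by simp))
    have hglast : g (Fin.last (C+2)) = T₀ := by
      have h1 : (Fin.last (C+2)).val = C + 2 := rfl
      simp only [hgdef, h1]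
      rw [if_neg (by omega), if_neg (by omega), dif_neg (by omega)]
    have e1 : Matrix.vecMul g D j = ∑ i, g i * D i j := rfl
    have e2 : Matrix.vecMul g D j = p * D ⟨0, by omega⟩ j + q * D ⟨1, by omega⟩ j
        + (∑ c, T c * D ((c.addNat 2).castLE (by omega)) j)
        + T₀ * D (Fin.last (C+2)) j := by
      rw [e1, sum_decomp3 (fun i => g i * D i j), hg0, hg1, hglast]
      simp_rw [hgM]
    show Matrix.vecMul g D j = 0
    rw [e2, hzero ⟨0, by omega⟩ j (Or.inl (by norm_num)),
      hzero ⟨1, by omega⟩ j (Or.inl (by norm_num))]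
    rcases lt_or_ge j.val 2 with hj | hj
    · have hz : ∀ c : Fin C, D ((c.addNat 2).castLE (by omega)) j = 0 :=
        fun c => hzero _ j (Or.inr hj)
      simp_rw [hz, hzero (Fin.last (C+2)) j (Or.inr hj)]
      simp
    · rcases lt_or_ge j.val (C + 2) with hj2 | hj2
      · have hjeq : j = ((⟨j.val - 2, by omega⟩ : Fin C).addNat 2).castLE (by omega) := by
          ext; simp; omega
        rw [hjeq]
        rw [Finset.sum_eq_single_of_mem (⟨j.val - 2, by omega⟩ : Fin C)
            (Finset.mem_univ _)
            (fun b _ hb => by rw [hoffdiag b _ hb]; ring)]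
        rw [hdiag, hlastrow]
        have := (hT (⟨j.val - 2, by omega⟩ : Fin C)).ne'
        field_simp
        ring
      · have hjeq : j = Fin.last (C+2) := by
          ext
          have : (Fin.last (C+2)).val = C + 2 := rfl
          omega
        rw [hjeq]
        simp_rw [hlastcol, hcorner]
        rw [Finset.mul_sum]
        have hcanc : ∀ c : Fin C, T₀ * (T c / T₀) = T c := fun c => by
          field_simp
        simp_rw [hcanc]
        rw [← Finset.sum_mul]
        ring
end

section
/- Let U be a real Banach space, let 𝕌 ⊆ U be a subspace, let s ≥ 1 and a < b be real numbers, and let I be a quadrature functional that is sign-preserving. Let E, S : U → ℝ be continuously Fréchet differentiable with derivatives E′, S′. Let M : U → (U × U → ℝ) assign to each u ∈ U a continuous bilinear form M(u)(·,·) on U, and let B̃, D̃ : U × U → (U × U → ℝ) assign to each pair a continuous bilinear form, such that for all u, w ∈ U: B̃(u, w) is skew-symmetric (B̃(u, w)(p, q) = −B̃(u, w)(q, p) for all p, q), D̃(u, w) is positive semidefinite (D̃(u, w)(p, p) ≥ 0 for all p), B̃(u, w)(p, w) = 0 for all p, and D̃(u, w)(p, w) = 0 for all p. Suppose u : ℝ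 → U is a polynomial map of degree ≤ s with values in 𝕌 and g_E, g_S : ℝ → U are polynomial maps of degree ≤ s−1 with values in 𝕌, such that for every polynomial map v : ℝ → U of degree ≤ s−1 with values in 𝕌: (i) I(t ↦ M(u(t))(u′(t), v(t))) = I(t ↦ B̃(u(t), g_S(t))(g_E(t), v(t)) + D̃(u(t), g_E(t))(g_S(t), v(t))); (ii) I(t ↦ M(u(t))(v(t), g_E(t))) = ∫_a^b E′(u(t))(v(t)) dt; and (iii) I(t ↦ M(u(t))(v(t), g_S(t))) = ∫_a^b S′(u(t))(v(t)) dt. Then E(u(b)) = E(u(a)) and S(u(b)) ≥ S(u(a)). -/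
/-- `u : ℝ → U` is a polynomial map of degree at most `k` with coefficients in the
subspace `𝕌`, i.e. `u(t) = Σ_{i=0}^{k} t^i • c_i` with each `c_i ∈ 𝕌`. -/
def IsPolyMapIn {U : Type*} [AddCommGroup U] [Module ℝ U] (𝕌 : Submodule ℝ U)
    (k : ℕ) (u : ℝ → U) : Prop :=
  ∃ c : Fin (k + 1) → U, (∀ i, c i ∈ 𝕌) ∧ ∀ t : ℝ, u t = ∑ i : Fin (k + 1), t ^ (i : ℕ) • c i

/-- Theorem 4.2: the auxiliary-variable space–time discretisation of a
GENERIC PDE with mass operator `M`, extended Poisson operator `B̃` (skew-symmetric, with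
`B̃(u,w)(·,w) = 0`) and extended friction operator `D̃` (positive semidefinite, with
`D̃(u,w)(·,w) = 0`), driven by a sign-preserving quadrature functional `I`, conserves the
energy `E` and does not decrease the entropy `S` over the timestep `[a, b]`. -/
theorem generic_pde_scheme_energy_entropy
    (U : Type*) [NormedAddCommGroup U] [NormedSpace ℝ U] [CompleteSpace U]
    (𝕌 : Submodule ℝ U) (s : ℕ) (hs : 1 ≤ s) (a b : ℝ) (hab : a < b)
    (I : (ℝ → ℝ) →ₗ[ℝ] ℝ)
    (hIpos : ∀ φ : ℝ → ℝ, (∀ t, 0 ≤ φ t) → 0 ≤ I φ)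
    (E S : U → ℝ) (hE : ContDiff ℝ 1 E) (hS : ContDiff ℝ 1 S)
    (M : U → U →L[ℝ] U →L[ℝ] ℝ)
    (Bt Dt : U → U → U →L[ℝ] U →L[ℝ] ℝ)
    (hBskew : ∀ u w p q, Bt u w p q = -Bt u w q p)
    (hDpos : ∀ u w p, 0 ≤ Dt u w p p)
    (hBdeg : ∀ u w p, Bt u w p w = 0)
    (hDdeg : ∀ u w p, Dt u w p w = 0)
    (u : ℝ → U) (hu : IsPolyMapIn 𝕌 s u)
    (gE gS : ℝ → U)
    (hgE : IsPolyMapIn 𝕌 (s - 1) gE) (hgS : IsPolyMapIn 𝕌 (s - 1) gS)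
    (h1 : ∀ v : ℝ → U, IsPolyMapIn 𝕌 (s - 1) v →
      I (fun t => M (u t) (deriv u t) (v t)) =
        I (fun t => Bt (u t) (gS t) (gE t) (v t) + Dt (u t) (gE t) (gS t) (v t)))
    (h2 : ∀ v : ℝ → U, IsPolyMapIn 𝕌 (s - 1) v →
      I (fun t => M (u t) (v t) (gE t)) = ∫ t in a..b, fderiv ℝ E (u t) (v t))
    (h3 : ∀ v : ℝ → U, IsPolyMapIn 𝕌 (s - 1) v →
      I (fun t => M (u t) (v t) (gS t)) = ∫ t in a..b, fderiv ℝ S (u t) (v t)) :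
    E (u b) = E (u a) ∧ S (u a) ≤ S (u b) := by
  obtain ⟨c, hc𝕌, hcu⟩ := hu
  have hueq : u = fun t => ∑ i : Fin (s + 1), t ^ (i : ℕ) • c i := funext hcu
  have key : ∀ t : ℝ, HasDerivAt u
      (∑ i : Fin (s + 1), (((i : ℕ) : ℝ) * t ^ ((i : ℕ) - 1)) • c i) t := by
    intro t
    rw [hueq]
    exact HasDerivAt.fun_sum fun i _ => (hasDerivAt_pow (i : ℕ) t).smul_const (c i)
  obtain ⟨m, hm⟩ : ∃ m, s = m + 1 := ⟨s - 1, (Nat.succ_pred_eq_of_pos hs).symm⟩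
  subst hm
  have hderiv : ∀ t : ℝ, deriv u t =
      ∑ j : Fin (m + 1), t ^ (j : ℕ) • ((((j : ℕ) : ℝ) + 1) • c j.succ) := by
    intro t
    rw [(key t).deriv, Fin.sum_univ_succ]
    simp only [Fin.val_zero, Nat.cast_zero, zero_mul, zero_smul, zero_add, Fin.val_succ]
    refine Finset.sum_congr rfl fun j _ => ?_
    rw [smul_smul, Nat.add_sub_cancel]
    congr 1
    push_cast
    ring
  have hpolyd : IsPolyMapIn 𝕌 (m + 1 - 1) (deriv u) :=
    ⟨fun j => (((j : ℕ) : ℝ) + 1) • c j.succ,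
      fun j => Submodule.smul_mem _ _ (hc𝕌 _), hderiv⟩
  have hu' : ∀ t : ℝ, HasDerivAt u (deriv u t) t := by
    intro t; rw [(key t).deriv]; exact key t
  have hcontu : Continuous u := by
    rw [hueq]
    exact continuous_finset_sum _ fun i _ => (continuous_pow _).smul continuous_const
  have hcontdu : Continuous (deriv u) := by
    rw [funext hderiv]
    exact continuous_finset_sum _ fun i _ => (continuous_pow _).smul continuous_const
  have FTC : ∀ F : U → ℝ, ContDiff ℝ 1 F →
      (∫ t in a..b, fderiv ℝ F (u t) (deriv u t)) = F (u b) - F (u a) := by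
    intro F hF
    apply intervalIntegral.integral_eq_sub_of_hasDerivAt
    · intro t _
      exact ((hF.differentiable one_ne_zero (u t)).hasFDerivAt).comp_hasDerivAt t (hu' t)
    · exact (((hF.continuous_fderiv one_ne_zero).comp hcontu).clm_apply hcontdu).intervalIntegrable a b
  have hBzero : ∀ x w p, Bt x w p p = 0 := by
    intro x w p
    have := hBskew x w p p
    linarith
  -- Energy
  have e1 := h2 (deriv u) hpolyd
  have e2 := h1 gE hgE
  have ez : (fun t => Bt (u t) (gS t) (gE t) (gE t) + Dt (u t) (gE t) (gS t) (gE t))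
      = (0 : ℝ → ℝ) := by
    funext t
    simp [hBzero, hDdeg]
  rw [ez, map_zero] at e2
  have hEeq : E (u b) - E (u a) = 0 := by
    rw [← FTC E hE, ← e1, e2]
  -- Entropy
  have s1 := h3 (deriv u) hpolyd
  have s2 := h1 gS hgS
  have hnn : 0 ≤ I (fun t => Bt (u t) (gS t) (gE t) (gS t) + Dt (u t) (gE t) (gS t) (gS t)) := by
    apply hIpos
    intro t
    rw [hBdeg]
    simpa using hDpos (u t) (gE t) (gS t)
  have hSeq : 0 ≤ S (u b) - S (u a) := by
    rw [← FTC S hS, ← s1, s2]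
    exact hnn
  exact ⟨by linarith, by linarith⟩
end
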